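/- Let Γ be an energy game arena with least energy progress measure f*. Let f₀ be the constant-0 function on V, and let f₀, f₁, …, f_k be any sequence with f_{j+1} = δ(f_j, v_j) where f_j violates the EPM local condition at v_j, for each j < k. Then f_j ⊑ f* for every j ≤ k: every function reachable from 0 by lifts at violating vertices is bounded above by the least energy progress measure. -/

import Mathlib

open scoped Classical
noncomputable section

/-- An energy game arena: vertices `V`, edge relation `E`, integer weights `w`,
player-0 vertices `P0` (player 1 owns the rest), every vertex has a successor. -/
structure Arena (V : Type) where
  E : V → V → Prop
  w : V → V → ℤ
  P0 : V → Prop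
  total : ∀ v, ∃ v', E v v'

variable {V : Type}

/-- `ρ` is a play (infinite path) starting at `v`. -/
def IsPlay (A : Arena V) (v : V) (ρ : ℕ → V) : Prop :=
  ρ 0 = v ∧ ∀ i, A.E (ρ i) (ρ (i + 1))

/-- A memoryless strategy for player 0. -/
def Strategy0 (A : Arena V) (σ : V → V) : Prop :=
  ∀ v, A.P0 v → A.E v (σ v)

/-- A memoryless strategy for player 1. -/
def Strategy1 (A : Arena V) (σ : V → V) : Prop :=
  ∀ v, ¬ A.P0 v → A.E v (σ v)

/-- The play `ρ` is consistent with the player-0 strategy `σ`. -/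
def Consistent0 (A : Arena V) (σ : V → V) (ρ : ℕ → V) : Prop :=
  ∀ j, A.P0 (ρ j) → ρ (j + 1) = σ (ρ j)

/-- The play `ρ` is consistent with the player-1 strategy `σ`. -/
def Consistent1 (A : Arena V) (σ : V → V) (ρ : ℕ → V) : Prop :=
  ∀ j, ¬ A.P0 (ρ j) → ρ (j + 1) = σ (ρ j)

/-- Energy level of the prefix `ρ 0 … ρ j` with initial credit `c`. -/
def energy (A : Arena V) (c : ℕ) (ρ : ℕ → V) (j : ℕ) : ℤ :=
  (c : ℤ) + ∑ i ∈ Finset.range j, A.w (ρ i) (ρ (i + 1))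

/-- The player-0 strategy `σ` is winning from `v` with initial credit `c`. -/
def WinningFrom (A : Arena V) (σ : V → V) (v : V) (c : ℕ) : Prop :=
  ∀ ρ : ℕ → V, IsPlay A v ρ → Consistent0 A σ ρ → ∀ j, 0 ≤ energy A c ρ j

/-- Winning region of player 0. -/
def W0 (A : Arena V) : Set V :=
  {v | ∃ σ : V → V, Strategy0 A σ ∧ ∃ c : ℕ, WinningFrom A σ v c}

/-- `a ⊖ b = max (0, a - b)`, with `⊤ ⊖ b = ⊤`. -/
def osub (a : ℕ∞) (b : ℤ) : ℕ∞ :=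
  a.map (fun n : ℕ => ((n : ℤ) - b).toNat)

/-- Energy progress measure. -/
def IsEPM (A : Arena V) (f : V → ℕ∞) : Prop :=
  (∀ v, A.P0 v → ∃ v', A.E v v' ∧ osub (f v') (A.w v v') ≤ f v) ∧
  (∀ v, ¬ A.P0 v → ∀ v', A.E v v' → osub (f v') (A.w v v') ≤ f v)

/-- New value at `v` computed by the lifting operator. -/
def liftVal (A : Arena V) (f : V → ℕ∞) (v : V) : ℕ∞ :=
  if A.P0 v then sInf {x : ℕ∞ | ∃ v', A.E v v' ∧ x = osub (f v') (A.w v v')}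
  else sSup {x : ℕ∞ | ∃ v', A.E v v' ∧ x = osub (f v') (A.w v v')}

/-- The lifting operator `δ(·, v)`. -/
def liftOp (A : Arena V) (f : V → ℕ∞) (v : V) : V → ℕ∞ :=
  fun u => if u = v then liftVal A f v else f u

/-- `f` violates the EPM local condition at `v`. -/
def Violates (A : Arena V) (f : V → ℕ∞) (v : V) : Prop :=
  (A.P0 v ∧ ∀ v', A.E v v' → f v < osub (f v') (A.w v v')) ∨
  (¬ A.P0 v ∧ ∃ v', A.E v v' ∧ f v < osub (f v') (A.w v v'))

/-- `M_Γ = Σ_{v∈V} max({0} ∪ {−w(v,v') : (v,v') ∈ E})`. -/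
def MGamma (A : Arena V) [Fintype V] : ℕ :=
  ∑ v : V, (Finset.univ.filter (fun v' => A.E v v')).sup (fun v' => (-(A.w v v')).toNat)


lemma osub_mono {a a' : ℕ∞} (b : ℤ) (h : a ≤ a') : osub a b ≤ osub a' b := by
  cases a' with
  | top => simp only [osub, WithTop.map_top]; exact le_top
  | coe n' =>
    cases a with
    | top => simp at h
    | coe n =>
      have hn : n ≤ n' := by exact_mod_cast h
      have h1 : osub (n : ℕ∞) b = (((n:ℤ) - b).toNat : ℕ∞) := rfl
      have h2 : osub (n' : ℕ∞) b = (((n':ℤ) - b).toNat : ℕ∞) := rfl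
      show osub (n : ℕ∞) b ≤ osub (n' : ℕ∞) b
      rw [h1, h2]
      exact_mod_cast Int.toNat_le_toNat (by omega : (n:ℤ) - b ≤ (n':ℤ) - b)

lemma liftVal_le {V : Type} (A : Arena V) (f g : V → ℕ∞) (hfg : ∀ u, f u ≤ g u)
    (hEPM : IsEPM A g) (v : V) : liftVal A f v ≤ g v := by
  unfold liftVal
  by_cases h : A.P0 v
  · rw [if_pos h]
    obtain ⟨v', hE, hle⟩ := hEPM.1 v h
    exact le_trans (sInf_le ⟨v', hE, rfl⟩) (le_trans (osub_mono _ (hfg v')) hle)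
  · rw [if_neg h]
    apply sSup_le
    rintro x ⟨v', hE, rfl⟩
    exact le_trans (osub_mono _ (hfg v')) (hEPM.2 v h v' hE)

/-- Every function reachable from the constant-0 function by lifts at violating
vertices is bounded above by the least energy progress measure. -/
theorem stmt11 {V : Type} [Fintype V] [Nonempty V] (A : Arena V)
    (fstar : V → ℕ∞) (hEPM : IsEPM A fstar)
    (hleast : ∀ f : V → ℕ∞, IsEPM A f → ∀ v, fstar v ≤ f v)
    (k : ℕ) (F : ℕ → V → ℕ∞) (vs : ℕ → V)
    (h0 : F 0 = fun _ => 0)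
    (hstep : ∀ j < k, Violates A (F j) (vs j) ∧ F (j + 1) = liftOp A (F j) (vs j)) :
    ∀ j ≤ k, ∀ u, F j u ≤ fstar u := by
  intro j hj
  induction j with
  | zero => intro u; simp [h0]
  | succ n ih =>
    have hn : n < k := by omega
    obtain ⟨_, heq⟩ := hstep n hn
    have ihn := ih (by omega)
    intro u
    rw [heq]
    unfold liftOp
    by_cases hu : u = vs n
    · rw [if_pos hu, hu]
      exact liftVal_le A (F n) fstar ihn hEPM (vs n)
    · rw [if_neg hu]; exact ihn u
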